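/- In an unweighted undirected graph G with unique (tie-broken) shortest paths, for a source s and target v, fix the shortest path π(s,v) and for each edge e_i ∈ π(s,v) let D_i be the detour of the replacement path P_{s,v,{e_i}} = π(s,x_i) ∘ D_i ∘ π(y_i,v), where x_i, y_i ∈ π(s,v) with e_i ∈ π(x_i,y_i), D_i is internally vertex-disjoint from π(s,v), and x_i is chosen closest to s among all optimal replacement paths. Then for two detours D₁, D₂ with y₁ < x₂ (non-nested configuration), D₁ and D₂ are vertex-disjoint. -/

import Mathlib

set_option linter.unusedSectionVars false


/-- The `W`-weight of a walk: the sum of the weights of its edges. -/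
def walkWeight {V : Type*} (W : Sym2 V → ℝ) {G : SimpleGraph V} {u v : V}
    (p : G.Walk u v) : ℝ := (p.edges.map W).sum

/-- Position of a vertex along a walk (index in its support list); vertices of `π(s,v)` are
ordered by distance from `s`, and `vpos π u < vpos π u'` means `u` is closer to `s`. -/
def vpos {V : Type*} [DecidableEq V] {G : SimpleGraph V} {s v : V}
    (π : G.Walk s v) (u : V) : ℕ := π.support.idxOf u

section Aux
open SimpleGraph List

variable {V : Type*} [DecidableEq V] {G : SimpleGraph V} {W : Sym2 V → ℝ}

lemma walkWeight_append {u v w : V} (p : G.Walk u v) (q : G.Walk v w) :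
    walkWeight W (p.append q) = walkWeight W p + walkWeight W q := by
  simp [walkWeight, Walk.edges_append]

lemma walkWeight_reverse {u v : V} (p : G.Walk u v) :
    walkWeight W p.reverse = walkWeight W p := by
  simp [walkWeight, Walk.edges_reverse, List.sum_reverse]

lemma walkWeight_nonneg (hW : ∀ e, 0 < W e) {u v : V} (p : G.Walk u v) :
    0 ≤ walkWeight W p :=
  List.sum_nonneg (by
    rintro r hr
    obtain ⟨e, _, rfl⟩ := List.mem_map.1 hr
    exact (hW e).le)

lemma walkWeight_pos (hW : ∀ e, 0 < W e) {u v : V} (p : G.Walk u v) (h : u ≠ v) :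
    0 < walkWeight W p := by
  cases p with
  | nil => exact absurd rfl h
  | cons h' q =>
    simp only [walkWeight, Walk.edges_cons, List.map_cons, List.sum_cons]
    exact add_pos_of_pos_of_nonneg (hW _) (walkWeight_nonneg hW q)

lemma walkWeight_bypass_le (hW : ∀ e, 0 < W e) {u v : V} (p : G.Walk u v) :
    walkWeight W p.bypass ≤ walkWeight W p := by
  obtain ⟨l, hl1, hl2⟩ :=
    List.subperm_of_subset (p.bypass_isPath.isTrail.edges_nodup) (p.edges_bypass_subset)
  calc walkWeight W p.bypass = (l.map W).sum := by
        rw [walkWeight, (hl1.map W).sum_eq]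
    _ ≤ (p.edges.map W).sum := List.Sublist.sum_le_sum (hl2.map W)
        (by rintro r hr; obtain ⟨e, _, rfl⟩ := List.mem_map.1 hr; exact (hW e).le)

end Aux

section Pos
open SimpleGraph List
variable {V : Type*} [DecidableEq V] {G : SimpleGraph V}

lemma takeUntil_cons_self {a b w : V} (hadj : G.Adj a b) (q : G.Walk b w)
    (h : a ∈ (Walk.cons hadj q).support) :
    (Walk.cons hadj q).takeUntil a h = Walk.nil := by
  simp [Walk.takeUntil]

lemma takeUntil_cons_ne {a b w u : V} (hadj : G.Adj a b) (q : G.Walk b w)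
    (h : u ∈ (Walk.cons hadj q).support) (hne : a ≠ u) (h' : u ∈ q.support) :
    (Walk.cons hadj q).takeUntil u h = Walk.cons hadj (q.takeUntil u h') := by
  simp only [Walk.takeUntil]
  rw [dif_neg hne]

lemma indexOf_le_indexOf_end {s z : V} (q : G.Walk s z) (h : q.support.Nodup) :
    ∀ u ∈ q.support, q.support.idxOf u ≤ q.support.idxOf z := by
  induction q with
  | nil => intro u hu; rw [Walk.mem_support_nil_iff] at hu; subst hu; exact le_rfl
  | @cons a b c hadj p ih =>
    intro u hu
    rw [Walk.support_cons] at h hu ⊢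
    have ha : a ∉ p.support := (List.nodup_cons.1 h).1
    have hc : c ∈ p.support := Walk.end_mem_support p
    have hca : c ≠ a := fun hh => ha (hh ▸ hc)
    by_cases hua : u = a
    · subst hua; simp
    · have hu' : u ∈ p.support := (List.mem_cons.1 hu).resolve_left hua
      rw [List.idxOf_cons_ne _ (Ne.symm hua), List.idxOf_cons_ne _ (Ne.symm hca)]
      exact Nat.succ_le_succ (ih (List.nodup_cons.1 h).2 u hu')
end Pos

section Pos2
open SimpleGraph List
variable {V : Type*} [DecidableEq V] {G : SimpleGraph V} {s v z u : V} {π : G.Walk s v}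

lemma support_split (hz : z ∈ π.support) :
    π.support = (π.takeUntil z hz).support ++ (π.dropUntil z hz).support.tail := by
  conv_lhs => rw [← π.take_spec hz]
  exact Walk.support_append _ _

lemma vpos_le_of_mem_takeUntil (hπ : π.support.Nodup) (hz : z ∈ π.support)
    (hu : u ∈ (π.takeUntil z hz).support) : vpos π u ≤ vpos π z := by
  have hzt : z ∈ (π.takeUntil z hz).support := Walk.end_mem_support _
  have htn : (π.takeUntil z hz).support.Nodup := by
    rw [support_split hz] at hπ; exact hπ.of_append_left
  unfold vpos
  rw [support_split hz, List.idxOf_append_of_mem hu, List.idxOf_append_of_mem hzt]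
  exact indexOf_le_indexOf_end _ htn u hu

lemma le_vpos_of_mem_dropUntil (hπ : π.support.Nodup) (hz : z ∈ π.support)
    (hu : u ∈ (π.dropUntil z hz).support) : vpos π z ≤ vpos π u := by
  by_cases huz : u = z
  · subst huz; exact le_rfl
  · have hu' : u ∈ (π.dropUntil z hz).support.tail := by
      have hc := Walk.support_eq_cons (π.dropUntil z hz)
      rw [hc] at hu
      exact (List.mem_cons.1 hu).resolve_left huz
    have hnt : u ∉ (π.takeUntil z hz).support := by
      have hπ' := hπ
      rw [support_split hz] at hπ'
      exact fun hmem => (List.disjoint_of_nodup_append hπ') hmem hu'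
    have hzt : z ∈ (π.takeUntil z hz).support := Walk.end_mem_support _
    unfold vpos
    rw [support_split hz, List.idxOf_append_of_notMem hnt, List.idxOf_append_of_mem hzt]
    have h1 : (π.takeUntil z hz).support.idxOf z < (π.takeUntil z hz).support.length :=
      List.idxOf_lt_length_iff.2 hzt
    omega

lemma mem_takeUntil_of_vpos_le (hπ : π.support.Nodup) (hz : z ∈ π.support) (hu : u ∈ π.support)
    (h : vpos π u ≤ vpos π z) : u ∈ (π.takeUntil z hz).support := by
  by_contra hn
  have hmem : u ∈ (π.dropUntil z hz).support := by
    have hs := support_split hz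
    rw [hs] at hu
    rcases List.mem_append.1 hu with h1 | h2
    · exact absurd h1 hn
    · exact List.mem_of_mem_tail h2
  have h2 := le_vpos_of_mem_dropUntil hπ hz hmem
  have heq : vpos π u = vpos π z := le_antisymm h h2
  have : u = z := (List.idxOf_inj hu).1 heq
  subst this
  exact hn (Walk.end_mem_support _)

lemma takeUntil_congr {u v z : V} {p p' : G.Walk u v} (h : p = p') (hz : z ∈ p.support) :
    p.takeUntil z hz = p'.takeUntil z (h ▸ hz) := by subst h; rfl

lemma takeUntil_nil {a : V} (h : a ∈ (Walk.nil : G.Walk a a).support) :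
    (Walk.nil : G.Walk a a).takeUntil a h = Walk.nil := rfl

lemma takeUntil_takeUntil' (p : G.Walk s v) (hz : z ∈ p.support)
    (hu : u ∈ (p.takeUntil z hz).support) :
    (p.takeUntil z hz).takeUntil u hu = p.takeUntil u (p.support_takeUntil_subset hz hu) := by
  induction p with
  | nil =>
    rw [Walk.mem_support_nil_iff] at hz
    subst hz
    have hus : u = z := Walk.mem_support_nil_iff.1 (Walk.support_takeUntil_subset _ _ hu)
    subst hus
    rfl
  | @cons a b c hadj q ih =>
    by_cases hza : a = z
    · subst hza
      have e1 := takeUntil_cons_self hadj q hz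
      have hu2 : u ∈ (Walk.nil : G.Walk a a).support := e1 ▸ hu
      have hus : u = a := by simpa using hu2
      subst hus
      rw [takeUntil_congr e1 hu, takeUntil_nil, takeUntil_cons_self]
    · have hz' : z ∈ q.support := by
        rw [Walk.support_cons] at hz
        exact (List.mem_cons.1 hz).resolve_left (fun hh => hza hh.symm)
      have e1 : (Walk.cons hadj q).takeUntil z hz = Walk.cons hadj (q.takeUntil z hz') :=
        takeUntil_cons_ne hadj q hz hza hz'
      rw [takeUntil_congr e1 hu]
      by_cases hua : a = u
      · subst hua
        rw [takeUntil_cons_self, takeUntil_cons_self]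
      · have hu2 : u ∈ (Walk.cons hadj (q.takeUntil z hz')).support := e1 ▸ hu
        have hu' : u ∈ (q.takeUntil z hz').support := by
          rw [Walk.support_cons] at hu2
          exact (List.mem_cons.1 hu2).resolve_left (fun hh => hua hh.symm)
        rw [takeUntil_cons_ne hadj _ _ hua hu',
            takeUntil_cons_ne hadj q _ hua (q.support_takeUntil_subset hz' hu')]
        congr 1
        exact ih hz' hu'

lemma walkWeight_takeUntil_lt {W : Sym2 V → ℝ} (hW : ∀ e, 0 < W e) (hπ : π.support.Nodup)
    (hu : u ∈ π.support) (hz : z ∈ π.support) (h : vpos π u < vpos π z) :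
    walkWeight W (π.takeUntil u hu) < walkWeight W (π.takeUntil z hz) := by
  have hmem : u ∈ (π.takeUntil z hz).support := mem_takeUntil_of_vpos_le hπ hz hu h.le
  have hne : u ≠ z := fun hh => by subst hh; exact lt_irrefl _ h
  have hsplit := Walk.take_spec (π.takeUntil z hz) hmem
  have := congrArg (walkWeight W) hsplit
  rw [walkWeight_append, takeUntil_takeUntil'] at this
  have hpos : 0 < walkWeight W ((π.takeUntil z hz).dropUntil u hmem) :=
    walkWeight_pos hW _ hne
  have hpe : π.takeUntil u (π.support_takeUntil_subset hz hmem) = π.takeUntil u hu := rfl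
  rw [hpe] at this
  linarith

end Pos2


open SimpleGraph

/-- Setup of single-failure replacement-path detours: `π = π(s,v)` is the
unique shortest path; for `i ∈ {0,1}`, the failed edge is `e_i = s(a i, a' i) ∈ π` lying on
`π` between `x i` and `y i`; the replacement path
`P_i = π(s, x_i) ∘ D_i ∘ π(y_i, v)` is a shortest `s–v` path avoiding `e_i`, the detour
`D_i` is internally vertex-disjoint from `π`, and its starting point `x i` is the divergence
point closest to `s` among all optimal replacement paths (hypothesis `hmin`).  Shortest
paths in every edge-deleted subgraph are unique under `W` (hypothesis `huniq`).
Conclusion: if the detours are non-nested, i.e. `y 0 < x 1` on `π`, then `D 0` and `D 1`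
are vertex-disjoint. -/
theorem nonnested_detours_disjoint {V : Type*} [DecidableEq V]
    (G : SimpleGraph V) (W : Sym2 V → ℝ) (hW : ∀ e, 0 < W e)
    (huniq : ∀ (s' : Set (Sym2 V)) (u w : V) (p q : G.Walk u w), p.IsPath → q.IsPath →
      (∀ f ∈ p.edges, f ∉ s') → (∀ f ∈ q.edges, f ∉ s') →
      (∀ r : G.Walk u w, r.IsPath → (∀ f ∈ r.edges, f ∉ s') →
        walkWeight W p ≤ walkWeight W r) →
      (∀ r : G.Walk u w, r.IsPath → (∀ f ∈ r.edges, f ∉ s') →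
        walkWeight W q ≤ walkWeight W r) →
      p = q)
    (s v : V) (π : G.Walk s v) (hπ : π.IsPath)
    (hπopt : ∀ R : G.Walk s v, R.IsPath → walkWeight W π ≤ walkWeight W R)
    (x y a a' : Fin 2 → V)
    (hx : ∀ i, x i ∈ π.support) (hy : ∀ i, y i ∈ π.support)
    (ha : ∀ i, s(a i, a' i) ∈ π.edges)
    (hconsec : ∀ i, vpos π (a' i) = vpos π (a i) + 1)
    (hbetween : ∀ i, vpos π (x i) ≤ vpos π (a i) ∧ vpos π (a' i) ≤ vpos π (y i))
    (D : (i : Fin 2) → G.Walk (x i) (y i))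
    (hDpath : ∀ i, (D i).IsPath)
    (hintern : ∀ i, ∀ u ∈ (D i).support, u ∈ π.support → u = x i ∨ u = y i)
    (hPpath : ∀ i,
      ((π.takeUntil (x i) (hx i)).append ((D i).append (π.dropUntil (y i) (hy i)))).IsPath)
    (hPavoid : ∀ i, s(a i, a' i) ∉
      ((π.takeUntil (x i) (hx i)).append ((D i).append (π.dropUntil (y i) (hy i)))).edges)
    (hPopt : ∀ i, ∀ R : G.Walk s v, R.IsPath → s(a i, a' i) ∉ R.edges →
      walkWeight W
        ((π.takeUntil (x i) (hx i)).append ((D i).append (π.dropUntil (y i) (hy i)))) ≤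
      walkWeight W R)
    (hmin : ∀ i, ∀ (u : V) (hu : u ∈ π.support) (R : G.Walk u v),
      ((π.takeUntil u hu).append R).IsPath →
      s(a i, a' i) ∉ ((π.takeUntil u hu).append R).edges →
      walkWeight W ((π.takeUntil u hu).append R) ≤
        walkWeight W
          ((π.takeUntil (x i) (hx i)).append ((D i).append (π.dropUntil (y i) (hy i)))) →
      0 < R.length → R.getVert 1 ∉ π.support →
      vpos π (x i) ≤ vpos π u)
    (horder : vpos π (y 0) < vpos π (x 1)) :
    ∀ u ∈ (D 0).support, u ∉ (D 1).support := by
  intro u hu0 hu1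
  have hπn : π.support.Nodup := hπ.support_nodup
  have hamem : ∀ i, a i ∈ π.support := fun i => π.fst_mem_support_of_mem_edges (ha i)
  have ha'mem : ∀ i, a' i ∈ π.support := fun i => π.snd_mem_support_of_mem_edges (ha i)
  have h00 := (hbetween 0).1
  have h01 := (hbetween 0).2
  have h10 := (hbetween 1).1
  have h11 := (hbetween 1).2
  have hc0 := hconsec 0
  have hc1 := hconsec 1
  -- edge-avoidance facts
  have hT1 : s(a 0, a' 0) ∉ (π.takeUntil (x 0) (hx 0)).edges := by
    intro hmem
    have l1 := vpos_le_of_mem_takeUntil hπn (hx 0)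
      (Walk.fst_mem_support_of_mem_edges _ hmem)
    have l2 := vpos_le_of_mem_takeUntil hπn (hx 0)
      (Walk.snd_mem_support_of_mem_edges _ hmem)
    omega
  have hD0sub : (D 0).edges ⊆
      ((π.takeUntil (x 0) (hx 0)).append ((D 0).append (π.dropUntil (y 0) (hy 0)))).edges := by
    intro f hf
    rw [Walk.edges_append]
    exact List.mem_append_right _ (by rw [Walk.edges_append]; exact List.mem_append_left _ hf)
  have hD1sub : (D 1).edges ⊆
      ((π.takeUntil (x 1) (hx 1)).append ((D 1).append (π.dropUntil (y 1) (hy 1)))).edges := by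
    intro f hf
    rw [Walk.edges_append]
    exact List.mem_append_right _ (by rw [Walk.edges_append]; exact List.mem_append_left _ hf)
  have hD0e0 : s(a 0, a' 0) ∉ (D 0).edges := fun hm => hPavoid 0 (hD0sub hm)
  have hD1e1 : s(a 1, a' 1) ∉ (D 1).edges := fun hm => hPavoid 1 (hD1sub hm)
  have hD1e0 : s(a 0, a' 0) ∉ (D 1).edges := by
    intro hmem
    have hA' : a' 0 ∈ (D 1).support := Walk.snd_mem_support_of_mem_edges _ hmem
    rcases hintern 1 _ hA' (ha'mem 0) with h | h
    · have : vpos π (a' 0) = vpos π (x 1) := by rw [h]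
      omega
    · have : vpos π (a' 0) = vpos π (y 1) := by rw [h]
      omega
  have hD0e1 : s(a 1, a' 1) ∉ (D 0).edges := by
    intro hmem
    have hA : a 1 ∈ (D 0).support := Walk.fst_mem_support_of_mem_edges _ hmem
    rcases hintern 0 _ hA (hamem 1) with h | h
    · have : vpos π (a 1) = vpos π (x 0) := by rw [h]
      omega
    · have : vpos π (a 1) = vpos π (y 0) := by rw [h]
      omega
  have hdropx1 : s(a 0, a' 0) ∉ (π.dropUntil (x 1) (hx 1)).edges := by
    intro hmem
    have l1 := le_vpos_of_mem_dropUntil hπn (hx 1)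
      (Walk.snd_mem_support_of_mem_edges _ hmem)
    omega
  have htakey0 : s(a 1, a' 1) ∉ (π.takeUntil (y 0) (hy 0)).edges := by
    intro hmem
    have l1 := vpos_le_of_mem_takeUntil hπn (hy 0)
      (Walk.fst_mem_support_of_mem_edges _ hmem)
    omega
  have hdropy1 : s(a 1, a' 1) ∉ (π.dropUntil (y 1) (hy 1)).edges := by
    intro hmem
    have l1 := le_vpos_of_mem_dropUntil hπn (hy 1)
      (Walk.fst_mem_support_of_mem_edges _ hmem)
    omega
  -- the two composite walks
  set T : G.Walk s v := (π.takeUntil (x 0) (hx 0)).append (((D 0).takeUntil u hu0).append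
      ((((D 1).takeUntil u hu1).reverse).append (π.dropUntil (x 1) (hx 1)))) with hTdef
  set U : G.Walk s v := (π.takeUntil (y 0) (hy 0)).append ((((D 0).dropUntil u hu0).reverse).append
      (((D 1).dropUntil u hu1).append (π.dropUntil (y 1) (hy 1)))) with hUdef
  have hTavoid : s(a 0, a' 0) ∉ T.edges := by
    rw [hTdef]
    simp only [Walk.edges_append, List.mem_append, Walk.edges_reverse, List.mem_reverse]
    push_neg
    exact ⟨hT1, fun h => hD0e0 (Walk.edges_takeUntil_subset _ hu0 h),
      fun h => hD1e0 (Walk.edges_takeUntil_subset _ hu1 h), hdropx1⟩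
  have hUavoid : s(a 1, a' 1) ∉ U.edges := by
    rw [hUdef]
    simp only [Walk.edges_append, List.mem_append, Walk.edges_reverse, List.mem_reverse]
    push_neg
    exact ⟨htakey0, fun h => hD0e1 (Walk.edges_dropUntil_subset _ hu0 h),
      fun h => hD1e1 (Walk.edges_dropUntil_subset _ hu1 h), hdropy1⟩
  have h0 : walkWeight W
      ((π.takeUntil (x 0) (hx 0)).append ((D 0).append (π.dropUntil (y 0) (hy 0)))) ≤
      walkWeight W T :=
    le_trans (hPopt 0 T.bypass T.bypass_isPath
      (fun hm => hTavoid (Walk.edges_bypass_subset _ hm))) (walkWeight_bypass_le hW T)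
  have h1 : walkWeight W
      ((π.takeUntil (x 1) (hx 1)).append ((D 1).append (π.dropUntil (y 1) (hy 1)))) ≤
      walkWeight W U :=
    le_trans (hPopt 1 U.bypass U.bypass_isPath
      (fun hm => hUavoid (Walk.edges_bypass_subset _ hm))) (walkWeight_bypass_le hW U)
  -- weight decompositions
  have hD0split : walkWeight W (D 0) =
      walkWeight W ((D 0).takeUntil u hu0) + walkWeight W ((D 0).dropUntil u hu0) := by
    rw [← walkWeight_append, Walk.take_spec]
  have hD1split : walkWeight W (D 1) =
      walkWeight W ((D 1).takeUntil u hu1) + walkWeight W ((D 1).dropUntil u hu1) := by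
    rw [← walkWeight_append, Walk.take_spec]
  have hπy0 : walkWeight W (π.takeUntil (y 0) (hy 0)) + walkWeight W (π.dropUntil (y 0) (hy 0))
      = walkWeight W π := by rw [← walkWeight_append, Walk.take_spec]
  have hπx1 : walkWeight W (π.takeUntil (x 1) (hx 1)) + walkWeight W (π.dropUntil (x 1) (hx 1))
      = walkWeight W π := by rw [← walkWeight_append, Walk.take_spec]
  have hstrict : walkWeight W (π.takeUntil (y 0) (hy 0)) <
      walkWeight W (π.takeUntil (x 1) (hx 1)) :=
    walkWeight_takeUntil_lt hW hπn (hy 0) (hx 1) horder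
  rw [hTdef] at h0
  rw [hUdef] at h1
  simp only [walkWeight_append, walkWeight_reverse] at h0 h1
  rw [hD0split] at h0
  rw [hD1split] at h1
  linarith
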